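/- arXiv:2301.08714 — 2 statements merged into one kernel-verified Lean document; each statement's English description precedes it below -/
import Mathlib

section
/- Let X be a type, post : Set X → Set X a monotone operator, and c : Set X → Set X an operator such that for every set S ⊆ X there exists a set S' with S ⊆ S' and c(S) = post(S'). Then for every initial set X0 ⊆ X and every natural number t, post^[t](X0) ⊆ c^[t](X0). -/
/-- Proposition 3 of the Verse paper (soundness of incremental verification),
at the level of post operators. -/
theorem verifyInc_sound {X : Type*} (post c : Set X → Set X)
    (hmono : ∀ S S' : Set X, S ⊆ S' → post S ⊆ post S')
    (hcache : ∀ S : Set X, ∃ S' : Set X, S ⊆ S' ∧ c S = post S') :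
    ∀ (X0 : Set X) (t : ℕ), post^[t] X0 ⊆ c^[t] X0 := by
  have hpc : ∀ S : Set X, post S ⊆ c S := by
    intro S
    obtain ⟨S', hS, hc⟩ := hcache S
    rw [hc]
    exact hmono _ _ hS
  intro X0 t
  induction t with
  | zero => simp
  | succ n ih =>
    rw [Function.iterate_succ_apply', Function.iterate_succ_apply']
    exact (hmono _ _ ih).trans (hpc _)
end

section
/- Let X be a type, R : X → X → Prop a one-step transition relation, X0 ⊆ X an initial set, and U ⊆ X a set of unsafe states. Let c : Set X → Set X be a monotone-soundly over-approximating operator, i.e. {y | ∃ x ∈ S, R x y} ⊆ c(S) for every S ⊆ X. Fix m : ℕ and suppose c^[t](X0) ∩ U = ∅ for every t ≤ m. Then every execution of length at most m avoids U: for every t ≤ m and every x : Fin (t+1) → X with x 0 ∈ X0 and R (x i.castSucc) (x i.succ) for all i : Fin t, the final state x (Fin.last t) is not in U. -/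
/-- Soundness of bounded-horizon safety verification: if every level of the
over-approximating reachability computation is disjoint from the unsafe set,
then every execution of length at most `m` avoids the unsafe set. -/
theorem bounded_safety_sound {X : Type*} (R : X → X → Prop) (X0 U : Set X)
    (c : Set X → Set X)
    (hover : ∀ S : Set X, {y | ∃ x ∈ S, R x y} ⊆ c S)
    (m : ℕ) (hsafe : ∀ t ≤ m, c^[t] X0 ∩ U = ∅) :
    ∀ t ≤ m, ∀ x : Fin (t + 1) → X, x 0 ∈ X0 →
      (∀ i : Fin t, R (x i.castSucc) (x i.succ)) →
      x (Fin.last t) ∉ U := by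
  intro t ht x hx0 hstep hU
  have key : ∀ j : ℕ, (hj : j ≤ t) → x ⟨j, Nat.lt_succ_of_le hj⟩ ∈ c^[j] X0 := by
    intro j
    induction j with
    | zero => intro _; exact hx0
    | succ k ih =>
      intro hj
      have hk : k < t := hj
      have := hstep ⟨k, hk⟩
      rw [Function.iterate_succ_apply']
      exact hover _ ⟨x ⟨k, Nat.lt_succ_of_le (le_of_lt hk)⟩,
        ih (le_of_lt hk), this⟩
  have := key t le_rfl
  have h := hsafe t ht
  exact Set.eq_empty_iff_forall_notMem.mp h _ ⟨this, hU⟩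
end
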